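/- For any p in [1,∞) ∪ {∞}, the limit ℓp-halfspace H^p_{x,v} is invariant under positive scalings from x: if z ∈ H^p_{x,v} and δ > 0, then x + δ(z - x) ∈ H^p_{x,v}. In other words, H^p_{x,v} is a union of rays originating at x. -/

import Mathlib

open scoped ENNReal

noncomputable def pnorm {d : ℕ} (p : ℝ≥0∞) [Fact (1 ≤ p)] (x : Fin d → ℝ) : ℝ :=
  ‖(WithLp.equiv p (Fin d → ℝ)).symm x‖

def Hp {d : ℕ} (p : ℝ≥0∞) [Fact (1 ≤ p)] (x v : Fin d → ℝ) : Set (Fin d → ℝ) :=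
  {z | ∀ ε : ℝ, 0 < ε → pnorm p (x - z) ≤ pnorm p (x - ε • v - z)}

lemma pnorm_smul {d : ℕ} (p : ℝ≥0∞) [Fact (1 ≤ p)] (c : ℝ) (w : Fin d → ℝ) :
    pnorm p (c • w) = |c| * pnorm p w := by
  unfold pnorm
  rw [WithLp.equiv_symm_apply, WithLp.toLp_smul, norm_smul, Real.norm_eq_abs]

theorem halfspace_union_of_rays {d : ℕ} (p : ℝ≥0∞) [Fact (1 ≤ p)]
    (x v : Fin d → ℝ) (hv : v ≠ 0) (z : Fin d → ℝ) (hz : z ∈ Hp p x v)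
    (δ : ℝ) (hδ : 0 < δ) :
    x + δ • (z - x) ∈ Hp p x v := by
  intro ε hε
  have h := hz (ε / δ) (div_pos hε hδ)
  have e1 : x - (x + δ • (z - x)) = δ • (x - z) := by module
  have e2 : x - ε • v - (x + δ • (z - x)) = δ • (x - (ε / δ) • v - z) := by
    set c := ε / δ with hc
    have : ε = δ * c := (mul_div_cancel₀ _ hδ.ne').symm
    rw [this]
    module
  rw [e1, e2, pnorm_smul, pnorm_smul]
  exact mul_le_mul_of_nonneg_left h (abs_nonneg δ)
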